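/- For n ≥ 1 and nonnegative reals b_1, …, b_n with at least one b_i > 0, the determinant C(b_1,…,b_n) defined via the recursion C(b_1,…,b_n) = C(b_1,…,b_{n-2}, b_{n-1}+b_n) + b_n·D(b_1,…,b_{n-1}) + [D(b_1,…,b_{n-1}) - D(b_2,…,b_{n-1})], with C of one variable given by C(b_1) = b_1 + 4 (the 1×1 case), is positive and non-decreasing in the variable b_n. -/

import Mathlib

open Matrix Finset

def Dmat (n : ℕ) (b : Fin n → ℝ) : Matrix (Fin n) (Fin n) ℝ :=
  fun i j => (∑ t : Fin n, if n - 1 - min i.1 j.1 ≤ t.1 then b t else 0) +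
    (if i = j then 1 else 0)

noncomputable def D (n : ℕ) (b : Fin n → ℝ) : ℝ := (Dmat n b).det

/-- the kernel part of `Dmat` -/
def M0 (n : ℕ) (b : Fin n → ℝ) : Matrix (Fin n) (Fin n) ℝ :=
  fun i j => ∑ t : Fin n, if n - 1 - min i.1 j.1 ≤ t.1 then b t else 0

lemma M0_posSemidef (n : ℕ) (b : Fin n → ℝ) (hb : ∀ i, 0 ≤ b i) :
    (M0 n b).PosSemidef := by
  set X : Matrix (Fin n) (Fin n) ℝ :=
    fun t i => Real.sqrt (b t) * (if n - 1 - t.1 ≤ i.1 then (1:ℝ) else 0) with hX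
  have key : M0 n b = Xᴴ * X := by
    ext i j
    simp only [M0, Matrix.mul_apply, conjTranspose_apply, star_trivial]
    simp only [hX]
    refine Finset.sum_congr rfl fun t _ => ?_
    have hs := Real.mul_self_sqrt (hb t)
    have hi := i.isLt; have hj := j.isLt; have ht := t.isLt
    split_ifs with hA hB hC hB hC <;> first | omega | simp [hs]
  rw [key]
  exact posSemidef_conjTranspose_mul_self _

lemma psd_det_nonneg {n : ℕ} {A : Matrix (Fin n) (Fin n) ℝ} (hA : A.PosSemidef) :
    0 ≤ A.det := by
  rw [hA.isHermitian.det_eq_prod_eigenvalues]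
  exact Finset.prod_nonneg fun i _ => by
    simpa using hA.eigenvalues_nonneg i

lemma Dmat_eq (n : ℕ) (b : Fin n → ℝ) : Dmat n b = M0 n b + 1 := by
  ext i j
  simp [Dmat, M0, Matrix.one_apply]

lemma D_nonneg (n : ℕ) (b : Fin n → ℝ) (hb : ∀ i, 0 ≤ b i) : 0 ≤ D n b := by
  have : (Dmat n b).PosSemidef := by
    rw [Dmat_eq]
    exact (M0_posSemidef n b hb).add (Matrix.PosSemidef.one)
  exact psd_det_nonneg this

lemma D_step (n : ℕ) (a : Fin (n + 1) → ℝ) (ha : ∀ i, 0 ≤ a i) :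
    D n (fun i => a i.succ) ≤ D (n + 1) a := by
  classical
  set A := Dmat (n + 1) a with hAdef
  set v : Fin (n + 1) → ℝ := fun j => M0 (n + 1) a (Fin.last n) j with hv
  set w : Fin (n + 1) → ℝ := Pi.single (Fin.last n) 1 with hw
  have hA : A = A.updateRow (Fin.last n) (v + w) := by
    ext i j
    rw [Matrix.updateRow_apply]
    split_ifs with hi
    · subst hi
      simp only [hAdef, Dmat, hv, hw, M0, Pi.add_apply, Pi.single_apply]
      congr 1
      by_cases h : j = Fin.last n
      · simp [h]
      · simp [h, Ne.symm h]
    · rfl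
  -- the two split determinants
  have hsplit : A.det = (A.updateRow (Fin.last n) v).det + (A.updateRow (Fin.last n) w).det := by
    conv_lhs => rw [hA]
    exact Matrix.det_updateRow_add A (Fin.last n) v w
  -- the w-part equals the smaller determinant
  have hwdet : (A.updateRow (Fin.last n) w).det = D n (fun i => a i.succ) := by
    rw [Matrix.det_succ_row _ (Fin.last n)]
    rw [Finset.sum_eq_single (Fin.last n)]
    · have h1 : (A.updateRow (Fin.last n) w) (Fin.last n) (Fin.last n) = 1 := by
        simp [hw]
      rw [h1]
      have h2 : ((A.updateRow (Fin.last n) w).submatrix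
          (Fin.last n).succAbove (Fin.last n).succAbove) = Dmat n (fun i => a i.succ) := by
        ext i j
        simp only [Matrix.submatrix_apply, Fin.succAbove_last]
        rw [Matrix.updateRow_ne (Fin.castSucc_lt_last i).ne]
        simp only [hAdef, Dmat, Fin.coe_castSucc, Fin.castSucc_inj]
        congr 1
        · rw [Fin.sum_univ_succ]
          have hmin : ¬ (n + 1 - 1 - min i.1 j.1 ≤ (0 : Fin (n+1)).1) := by
            have := i.isLt; have := j.isLt
            simp only [Fin.val_zero]
            omega
          rw [if_neg hmin, zero_add]
          refine Finset.sum_congr rfl fun t _ => ?_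
          have := i.isLt; have := j.isLt; have := t.isLt
          have hcond : (n + 1 - 1 - min i.1 j.1 ≤ (t.succ).1) ↔ (n - 1 - min i.1 j.1 ≤ t.1) := by
            simp only [Fin.val_succ]
            omega
          by_cases h : n - 1 - min i.1 j.1 ≤ t.1
          · rw [if_pos (hcond.mpr h), if_pos h]
          · rw [if_neg (fun hh => h (hcond.mp hh)), if_neg h]
      rw [h2, Fin.val_last,
        Even.neg_one_pow (⟨n, rfl⟩ : Even (n + n)), one_mul, one_mul]
      rfl
    · intro j _ hj
      have : (A.updateRow (Fin.last n) w) (Fin.last n) j = 0 := by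
        simp [hw, Pi.single_apply, hj, Ne.symm hj]
      simp [this]
    · intro h
      exact absurd (Finset.mem_univ _) h
  have hvdet : 0 ≤ (A.updateRow (Fin.last n) v).det := by
    have heq : A.updateRow (Fin.last n) v = M0 (n + 1) a +
        Matrix.diagonal (fun i => if i = Fin.last n then (0 : ℝ) else 1) := by
      ext i j
      rw [Matrix.updateRow_apply, Matrix.add_apply, Matrix.diagonal_apply]
      split_ifs with hi hij hij'
      · subst hi; subst hij; simp [hv]
      · subst hi; simp [hv]
      · subst hij'; simp [hAdef, Dmat, M0]
      · simp [hAdef, Dmat, M0, hij']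
    rw [heq]
    refine psd_det_nonneg ((M0_posSemidef _ _ ha).add (Matrix.PosSemidef.diagonal fun i => ?_))
    dsimp only
    split_ifs <;> norm_num
  have hDeq : D (n + 1) a = (A.updateRow (Fin.last n) v).det + D n (fun i => a i.succ) := by
    rw [← hwdet, ← hsplit]
    rfl
  linarith

/-- The determinant `C(b_1,…,b_n)` from the Appendix, defined via the recursion
`C(b_1,…,b_n) = C(b_1,…,b_{n-2}, b_{n-1}+b_n) + b_n·D(b_1,…,b_{n-1})
  + [D(b_1,…,b_{n-1}) − D(b_2,…,b_{n-1})]`, with `C(b_1) = b_1 + 4`. -/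
noncomputable def C : (n : ℕ) → (Fin n → ℝ) → ℝ
  | 0, _ => 4
  | 1, b => b 0 + 4
  | (n + 2), b =>
      C (n + 1) (fun i => if i.1 = n then b i.castSucc + b (Fin.last (n + 1))
        else b i.castSucc)
      + b (Fin.last (n + 1)) * D (n + 1) (fun i => b i.castSucc)
      + (D (n + 1) (fun i => b i.castSucc) - D n (fun i => b i.succ.castSucc))

lemma C_aux : ∀ n : ℕ, ∀ b : Fin (n + 1) → ℝ, (∀ i, 0 ≤ b i) →
    0 < C (n + 1) b ∧
    ∀ c : ℝ, b (Fin.last n) ≤ c →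
      C (n + 1) b ≤ C (n + 1) (Function.update b (Fin.last n) c) := by
  intro n
  induction n with
  | zero =>
    intro b hb
    constructor
    · show 0 < b 0 + 4
      linarith [hb 0]
    · intro c hc
      show b 0 + 4 ≤ Function.update b (Fin.last 0) c 0 + 4
      have h0 : Function.update b (Fin.last 0) c 0 = c := by
        rw [show (0 : Fin 1) = Fin.last 0 from rfl, Function.update_self]
      rw [h0]
      exact add_le_add_left (le_trans (le_of_eq rfl) hc) 4
  | succ n ih =>
    intro b hb
    set a : Fin (n + 1) → ℝ := fun i => b i.castSucc with ha'
    set m : Fin (n + 1) → ℝ := fun i => if i.1 = n then b i.castSucc + b (Fin.last (n + 1))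
        else b i.castSucc with hm'
    have hCeq : C (n + 2) b = C (n + 1) m + b (Fin.last (n + 1)) * D (n + 1) a
        + (D (n + 1) a - D n (fun i => a i.succ)) := rfl
    have ha : ∀ i, 0 ≤ a i := fun i => hb _
    have hm : ∀ i, 0 ≤ m i := by
      intro i
      simp only [hm']
      split_ifs
      · exact add_nonneg (hb _) (hb _)
      · exact hb _
    have hD : 0 ≤ D (n + 1) a := D_nonneg _ _ ha
    have hstep : D n (fun i => a i.succ) ≤ D (n + 1) a := D_step n a ha
    obtain ⟨hpos, hmono⟩ := ih m hm
    have hblast : 0 ≤ b (Fin.last (n + 1)) := hb _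
    refine ⟨by rw [hCeq]; nlinarith, ?_⟩
    intro c hc
    set b' := Function.update b (Fin.last (n + 1)) c with hb'def
    have hbc : ∀ i : Fin (n + 1), b' i.castSucc = b i.castSucc := fun i =>
      Function.update_of_ne (Fin.castSucc_lt_last i).ne c b
    have hblast' : b' (Fin.last (n + 1)) = c := Function.update_self _ _ _
    have hmerge : (fun i : Fin (n + 1) => if i.1 = n then b' i.castSucc + b' (Fin.last (n + 1))
        else b' i.castSucc) = Function.update m (Fin.last n) (b (Fin.last n).castSucc + c) := by
      funext i
      by_cases hi : i = Fin.last n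
      · subst hi
        rw [Function.update_self, if_pos (by simp [Fin.val_last]), hbc, hblast']
      · have hi' : i.1 ≠ n := fun h => hi (Fin.ext h)
        rw [Function.update_of_ne hi, if_neg hi', hm']
        simp only [if_neg hi']
        exact hbc i
    have hCeq2 : C (n + 2) b' = C (n + 1) (Function.update m (Fin.last n)
          (b (Fin.last n).castSucc + c))
        + c * D (n + 1) a + (D (n + 1) a - D n (fun i => a i.succ)) := by
      show C (n + 1) (fun i : Fin (n + 1) => if i.1 = n then b' i.castSucc + b' (Fin.last (n + 1))
          else b' i.castSucc)
        + b' (Fin.last (n + 1)) * D (n + 1) (fun i => b' i.castSucc)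
        + (D (n + 1) (fun i => b' i.castSucc) - D n (fun i => b' i.succ.castSucc)) = _
      rw [hmerge, hblast']
      have h1 : (fun i : Fin (n + 1) => b' i.castSucc) = a := funext fun i => hbc i
      have h2 : (fun i : Fin n => b' i.succ.castSucc) = (fun i : Fin n => a i.succ) := by
        funext i
        exact hbc i.succ
      rw [h1, h2]
    have hmle : m (Fin.last n) ≤ b (Fin.last n).castSucc + c := by
      have : m (Fin.last n) = b (Fin.last n).castSucc + b (Fin.last (n + 1)) := by
        rw [hm']
        simp [Fin.val_last]
      rw [this]
      exact add_le_add_right hc _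
    have hCm := hmono (b (Fin.last n).castSucc + c) hmle
    have hmul : b (Fin.last (n + 1)) * D (n + 1) a ≤ c * D (n + 1) a :=
      mul_le_mul_of_nonneg_right hc hD
    rw [hCeq, hCeq2]
    linarith

/-- For `n ≥ 1` and nonnegative `b_1,…,b_n` with some `b_i > 0`, `C(b_1,…,b_n)` is
positive and non-decreasing in the last variable `b_n`. -/
theorem C_pos_and_monotone (n : ℕ) (b : Fin (n + 1) → ℝ)
    (hb : ∀ i, 0 ≤ b i) (hb' : ∃ i, 0 < b i) :
    0 < C (n + 1) b ∧
    ∀ c : ℝ, b (Fin.last n) ≤ c →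
      C (n + 1) b ≤ C (n + 1) (Function.update b (Fin.last n) c) :=
  C_aux n b hb
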